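/- (Relations (3.3) at the fixed points.) Let n ≥ 2k ≥ 0 and let w = w_{ℓ_1,...,ℓ_k} for some 1 ≤ ℓ_1 < ℓ_2 < ... < ℓ_k ≤ n, with the convention w(0) := 0. Then for every 1 ≤ i ≤ n, either w(i) + w(i−1) = n−k+i or w(i) − w(i−1) = 1; equivalently, (w(i) + w(i−1) − (n−k+i)) · (w(i) − w(i−1) − 1) = 0 as integers. -/

import Mathlib

open scoped BigOperators

/-- The permutation `w_{ℓ₁,…,ℓₖ}` of `{1,…,n}` (as a function `ℕ → ℕ`):
`w i = n - k + j` if `i = ℓ j` for some `1 ≤ j ≤ k`, and `w i = i - j` if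
`ℓ j < i < ℓ (j+1)` (with conventions `ℓ 0 = 0`, `ℓ (k+1) = n+1`); here `j`
is recovered as the number of `r ∈ {1,…,k}` with `ℓ r ≤ i` (resp. `ℓ r < i`). -/
def wPerm (n k : ℕ) (ℓ : ℕ → ℕ) (i : ℕ) : ℕ :=
  if ∃ j ∈ Finset.Icc 1 k, ℓ j = i then
    n - k + ((Finset.Icc 1 k).filter fun j => ℓ j ≤ i).card
  else
    i - ((Finset.Icc 1 k).filter fun j => ℓ j < i).card

/-- The conditions `1 ≤ ℓ 1 < ℓ 2 < ⋯ < ℓ k ≤ n`. -/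
def goodL (n k : ℕ) (ℓ : ℕ → ℕ) : Prop :=
  (∀ j ∈ Finset.Icc 1 k, 1 ≤ ℓ j ∧ ℓ j ≤ n) ∧
    ∀ j j' : ℕ, 1 ≤ j → j < j' → j' ≤ k → ℓ j < ℓ j'

lemma injOn_of_goodL (n k : ℕ) (ℓ : ℕ → ℕ) (hℓ : goodL n k ℓ) :
    Set.InjOn ℓ (Finset.Icc 1 k : Finset ℕ) := by
  intro a ha b hb hab
  simp only [Finset.coe_Icc, Set.mem_Icc] at ha hb
  by_contra hne
  rcases Nat.lt_or_ge a b with h' | h'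
  · exact absurd hab (Nat.ne_of_lt (hℓ.2 a b ha.1 h' hb.2))
  · rcases lt_or_eq_of_le h' with h'' | h''
    · exact absurd hab.symm (Nat.ne_of_lt (hℓ.2 b a hb.1 h'' ha.2))
    · exact hne h''.symm

lemma cardA_le (n k : ℕ) (ℓ : ℕ → ℕ) (hℓ : goodL n k ℓ) (i : ℕ) :
    ((Finset.Icc 1 k).filter fun j => ℓ j ≤ i).card ≤ i := by
  have h1 : ((Finset.Icc 1 k).filter fun j => ℓ j ≤ i).card ≤ (Finset.Icc 1 i).card := by
    apply Finset.card_le_card_of_injOn ℓ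
    · intro j hj
      simp only [Finset.mem_coe, Finset.mem_filter, Finset.mem_Icc] at hj ⊢
      exact ⟨(hℓ.1 j (Finset.mem_Icc.mpr hj.1)).1, hj.2⟩
    · intro a ha b hb hab
      apply injOn_of_goodL n k ℓ hℓ _ _ hab
      · simpa using (Finset.mem_filter.mp ha).1
      · simpa using (Finset.mem_filter.mp hb).1
  simpa using h1

lemma filter_lt_eq (n k : ℕ) (ℓ : ℕ → ℕ) (i : ℕ) (hi : 1 ≤ i) :
    ((Finset.Icc 1 k).filter fun j => ℓ j < i) =
      ((Finset.Icc 1 k).filter fun j => ℓ j ≤ i - 1) := by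
  apply Finset.filter_congr
  intro j _
  constructor <;> intro hj <;> omega

lemma cardA_eq_of_mem (n k : ℕ) (ℓ : ℕ → ℕ) (hℓ : goodL n k ℓ) (i : ℕ)
    (hP : ∃ j ∈ Finset.Icc 1 k, ℓ j = i) :
    ((Finset.Icc 1 k).filter fun j => ℓ j ≤ i).card =
      ((Finset.Icc 1 k).filter fun j => ℓ j < i).card + 1 := by
  obtain ⟨j0, hj0, hj0i⟩ := hP
  have hset : ((Finset.Icc 1 k).filter fun j => ℓ j ≤ i) =
      insert j0 ((Finset.Icc 1 k).filter fun j => ℓ j < i) := by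
    ext j
    simp only [Finset.mem_filter, Finset.mem_insert]
    constructor
    · rintro ⟨hj, hle⟩
      rcases lt_or_eq_of_le hle with hlt | heq
      · exact Or.inr ⟨hj, hlt⟩
      · left
        exact injOn_of_goodL n k ℓ hℓ (by simpa using hj) (by simpa using hj0)
          (heq.trans hj0i.symm)
    · rintro (rfl | ⟨hj, hlt⟩)
      · exact ⟨hj0, le_of_eq hj0i⟩
      · exact ⟨hj, le_of_lt hlt⟩
  rw [hset, Finset.card_insert_of_notMem]
  simp only [Finset.mem_filter, not_and]
  intro _
  omega

lemma cardA_eq_of_not_mem (n k : ℕ) (ℓ : ℕ → ℕ) (i : ℕ)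
    (hP : ¬ ∃ j ∈ Finset.Icc 1 k, ℓ j = i) :
    ((Finset.Icc 1 k).filter fun j => ℓ j ≤ i).card =
      ((Finset.Icc 1 k).filter fun j => ℓ j < i).card := by
  congr 1
  apply Finset.filter_congr
  intro j hj
  have : ℓ j ≠ i := fun heq => hP ⟨j, hj, heq⟩
  constructor <;> intro h' <;> omega

/-- Relations (3.3) at the fixed points: for `w = w_{ℓ₁,…,ℓₖ}` (with `w 0 = 0`,
which holds automatically for `wPerm`), for every `1 ≤ i ≤ n` either
`w i + w (i-1) = n - k + i` or `w i - w (i-1) = 1`; equivalently the integer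
product `(w i + w (i-1) - (n-k+i)) * (w i - w (i-1) - 1)` vanishes. -/
theorem wPerm_relations (n k : ℕ) (h : 2 * k ≤ n) (ℓ : ℕ → ℕ) (hℓ : goodL n k ℓ) :
    ∀ i, 1 ≤ i → i ≤ n →
      (((wPerm n k ℓ i : ℤ) + (wPerm n k ℓ (i - 1) : ℤ) = (n : ℤ) - (k : ℤ) + (i : ℤ) ∨
          (wPerm n k ℓ i : ℤ) - (wPerm n k ℓ (i - 1) : ℤ) = 1) ∧
        ((wPerm n k ℓ i : ℤ) + (wPerm n k ℓ (i - 1) : ℤ) - ((n : ℤ) - (k : ℤ) + (i : ℤ))) *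
            ((wPerm n k ℓ i : ℤ) - (wPerm n k ℓ (i - 1) : ℤ) - 1) = 0) := by
  intro i hi1 hin
  set A : ℕ → ℕ := fun m => ((Finset.Icc 1 k).filter fun j => ℓ j ≤ m).card with hA
  set B : ℕ → ℕ := fun m => ((Finset.Icc 1 k).filter fun j => ℓ j < m).card with hB
  have hk : k ≤ n := by omega
  have hBA : B i = A (i - 1) := by
    simp only [hA, hB]
    rw [filter_lt_eq n k ℓ i hi1]
  have hBA' : B (i - 1) ≤ A (i - 1) := by
    apply Finset.card_le_card
    intro j hj
    simp only [Finset.mem_filter] at hj ⊢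
    exact ⟨hj.1, by omega⟩
  have hAle : A (i - 1) ≤ i - 1 := cardA_le n k ℓ hℓ (i - 1)
  have key : ∀ m, ((wPerm n k ℓ m : ℤ) =
      if ∃ j ∈ Finset.Icc 1 k, ℓ j = m then ((n : ℤ) - k + A m) else ((m : ℤ) - B m)) ∨ True :=
    fun _ => Or.inr trivial
  clear key
  have main : (wPerm n k ℓ i : ℤ) + (wPerm n k ℓ (i - 1) : ℤ) = (n : ℤ) - (k : ℤ) + (i : ℤ) ∨
      (wPerm n k ℓ i : ℤ) - (wPerm n k ℓ (i - 1) : ℤ) = 1 := by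
    by_cases hPi : ∃ j ∈ Finset.Icc 1 k, ℓ j = i
    · have hAi : A i = B i + 1 := cardA_eq_of_mem n k ℓ hℓ i hPi
      have hwi : wPerm n k ℓ i = n - k + A i := if_pos hPi
      by_cases hPi' : ∃ j ∈ Finset.Icc 1 k, ℓ j = i - 1
      · -- w(i-1) = n-k + A(i-1), and A(i-1) = B(i-1)+1; w i - w(i-1) = 1
        have hwi' : wPerm n k ℓ (i - 1) = n - k + A (i - 1) := if_pos hPi'
        right
        rw [hwi, hwi']
        push_cast [Nat.sub_add_cancel] 
        have h1 : (↑(n - k) : ℤ) = n - k := by omega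
        rw [h1]
        have : (A i : ℤ) = A (i - 1) + 1 := by rw [hAi, hBA]; push_cast; ring
        omega
      · -- w(i-1) = (i-1) - B(i-1), B(i-1) = A(i-1)
        have hwi' : wPerm n k ℓ (i - 1) = (i - 1) - B (i - 1) := if_neg hPi'
        left
        have hBB : B (i - 1) = A (i - 1) := (cardA_eq_of_not_mem n k ℓ (i - 1) hPi').symm
        rw [hwi, hwi']
        have h1 : (↑(n - k + A i) : ℤ) = n - k + A i := by push_cast [hk]; omega
        have h2 : (↑(i - 1 - B (i - 1)) : ℤ) = (i : ℤ) - 1 - B (i - 1) := by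
          have : B (i - 1) ≤ i - 1 := by omega
          omega
        rw [h1, h2]
        have : (A i : ℤ) = A (i - 1) + 1 := by rw [hAi, hBA]; push_cast; ring
        omega
    · have hwi : wPerm n k ℓ i = i - B i := if_neg hPi
      have hBi : B i ≤ i := by rw [hBA]; omega
      have h1 : (↑(i - B i) : ℤ) = (i : ℤ) - B i := by omega
      by_cases hPi' : ∃ j ∈ Finset.Icc 1 k, ℓ j = i - 1
      · left
        have hwi' : wPerm n k ℓ (i - 1) = n - k + A (i - 1) := if_pos hPi'
        rw [hwi, hwi', h1]
        have h2 : (↑(n - k + A (i - 1)) : ℤ) = n - k + A (i - 1) := by omega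
        rw [h2]
        have : (B i : ℤ) = A (i - 1) := by rw [hBA]
        omega
      · right
        have hwi' : wPerm n k ℓ (i - 1) = (i - 1) - B (i - 1) := if_neg hPi'
        have hBB : B (i - 1) = A (i - 1) := (cardA_eq_of_not_mem n k ℓ (i - 1) hPi').symm
        rw [hwi, hwi', h1]
        have h2 : (↑(i - 1 - B (i - 1)) : ℤ) = (i : ℤ) - 1 - B (i - 1) := by
          have : B (i - 1) ≤ i - 1 := by omega
          omega
        rw [h2]
        have : (B i : ℤ) = A (i - 1) := by rw [hBA]
        omega
  refine ⟨main, ?_⟩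
  rcases main with h1 | h1
  · rw [h1]; ring
  · rw [h1]; ring
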